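/- Define P^l_4: V_l ⊗ V_4 → V_{l+4} by P^l_4(v_q ⊗ w_r) = v_{q+r}, and let I^l_4: V_{l+4} → V_l ⊗ V_4 be the equivariant embedding I^l_4(v_k) = Σ_{i=0}^4 A_{[l,4;k,i]}·v_{k-i} ⊗ w_i with A_{[l,4;k,i]} = binom(4,i)·(l+4-k)(l+3-k)···(l+5-k-(4-i))·k(k-1)···(k-i+1)/((l+4)(l+3)(l+2)(l+1)) as in Formula 1. Then P^l_4 is sl(2,C)-equivariant and P^l_4 ∘ I^l_4 = id on V_{l+4}. -/

import Mathlib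

noncomputable section
open Finset

namespace Stmt18

def dv (k : ℤ) : ℤ → ℂ := fun j => if j = k then 1 else 0
/-- The delta basis tensor `v_q ⊗ w_i` of `V_l ⊗ V_4`, realized inside `ℤ × ℤ → ℂ`. -/
def dt (q i : ℤ) : ℤ × ℤ → ℂ := fun p => if p = (q, i) then 1 else 0

def Hv (n : ℤ) (f : ℤ → ℂ) : ℤ → ℂ := fun j => ((n - 2 * j : ℤ) : ℂ) * f j
def Ev (f : ℤ → ℂ) : ℤ → ℂ := fun j => ((-(j + 1) : ℤ) : ℂ) * f (j + 1)
def Fv (n : ℤ) (f : ℤ → ℂ) : ℤ → ℂ := fun j => ((j - 1 - n : ℤ) : ℂ) * f (j - 1)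

def Ht (l : ℤ) (f : ℤ × ℤ → ℂ) : ℤ × ℤ → ℂ :=
  fun p => ((l + 4 - 2 * p.1 - 2 * p.2 : ℤ) : ℂ) * f p
def Et (f : ℤ × ℤ → ℂ) : ℤ × ℤ → ℂ :=
  fun p => ((-(p.1 + 1) : ℤ) : ℂ) * f (p.1 + 1, p.2) + ((-(p.2 + 1) : ℤ) : ℂ) * f (p.1, p.2 + 1)
def Ft (l : ℤ) (f : ℤ × ℤ → ℂ) : ℤ × ℤ → ℂ :=
  fun p => ((p.1 - 1 - l : ℤ) : ℂ) * f (p.1 - 1, p.2) + ((p.2 - 5 : ℤ) : ℂ) * f (p.1, p.2 - 1)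

/-- The projector `P^l_4 : V_l ⊗ V_4 → V_{l+4}`, `P(v_q ⊗ w_r) = v_{q+r}`. -/
def Pop (f : ℤ × ℤ → ℂ) : ℤ → ℂ :=
  fun j => ∑ r ∈ Finset.Icc (0 : ℤ) 4, f (j - r, r)

/-- The Clebsch–Gordan coefficients `A_{[l,4;k,i]}` of Formula 1. -/
def A (l k i : ℤ) : ℂ :=
  (if i = 0 then ((l+4-k)*(l+3-k)*(l+2-k)*(l+1-k) : ℤ)
   else if i = 1 then (4*(l+4-k)*(l+3-k)*(l+2-k)*k : ℤ)
   else if i = 2 then (6*(l+4-k)*(l+3-k)*k*(k-1) : ℤ)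
   else if i = 3 then (4*(l+4-k)*k*(k-1)*(k-2) : ℤ)
   else if i = 4 then (k*(k-1)*(k-2)*(k-3) : ℤ) else 0 : ℤ)
    / (((l+4)*(l+3)*(l+2)*(l+1) : ℤ) : ℂ)

/-- The equivariant embedding `I^l_4 : V_{l+4} → V_l ⊗ V_4`. -/
def Iop (l : ℤ) (f : ℤ → ℂ) : ℤ × ℤ → ℂ :=
  fun p => if 0 ≤ p.2 ∧ p.2 ≤ 4 then A l (p.1 + p.2) p.2 * f (p.1 + p.2) else 0

lemma sumIcc (f : ℤ → ℂ) : ∑ r ∈ Finset.Icc (0:ℤ) 4, f r = f 0 + f 1 + f 2 + f 3 + f 4 := by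
  rw [show Finset.Icc (0:ℤ) 4 = {0,1,2,3,4} from rfl]
  simp [Finset.sum_insert, Finset.mem_insert]; ring

lemma popH (l : ℤ) (f : ℤ × ℤ → ℂ) : Pop (Ht l f) = Hv (l + 4) (Pop f) := by
  funext j
  simp only [Pop, Ht, Hv, sumIcc]
  push_cast; ring

lemma popE (f : ℤ × ℤ → ℂ) (hf : ∀ x, f (x, 5) = 0) : Pop (Et f) = Ev (Pop f) := by
  funext j
  simp only [Pop, Et, Ev, sumIcc]
  push_cast
  ring_nf
  simp only [show (4:ℤ)+1 = 5 from by norm_num, hf]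
  ring

lemma popF (l : ℤ) (f : ℤ × ℤ → ℂ) (hf : ∀ x, f (x, -1) = 0) :
    Pop (Ft l f) = Fv (l + 4) (Pop f) := by
  funext j
  simp only [Pop, Ft, Fv, sumIcc]
  push_cast
  ring_nf
  simp only [show (0:ℤ)-1 = -1 from by norm_num, hf]
  ring

/-- `P^l_4` is sl(2,ℂ)-equivariant and `P^l_4 ∘ I^l_4 = id` on `V_{l+4}`. -/
theorem stmt_18 (l : ℤ) (hl : 0 ≤ l) :
    (∀ q i : ℤ, 0 ≤ q → q ≤ l → 0 ≤ i → i ≤ 4 →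
      Pop (Ht l (dt q i)) = Hv (l + 4) (Pop (dt q i)) ∧
      Pop (Et (dt q i)) = Ev (Pop (dt q i)) ∧
      Pop (Ft l (dt q i)) = Fv (l + 4) (Pop (dt q i))) ∧
    (∀ k : ℤ, 0 ≤ k → k ≤ l + 4 → Pop (Iop l (dv k)) = dv k) := by
  constructor
  · intro q i _ _ h0 h4
    refine ⟨popH l _, popE _ ?_, popF l _ ?_⟩
    · intro x
      have : ¬((x, (5:ℤ)) = (q, i)) := by simp only [Prod.mk.injEq, not_and]; intro _; omega
      simp [dt, this]
    · intro x
      have : ¬((x, (-1:ℤ)) = (q, i)) := by simp only [Prod.mk.injEq, not_and]; intro _; omega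
      simp [dt, this]
  · intro k _ _
    have hdZ : (0:ℤ) < (l+4)*(l+3)*(l+2)*(l+1) := by
      have a : (0:ℤ) < l+4 := by omega
      have b : (0:ℤ) < l+3 := by omega
      have c : (0:ℤ) < l+2 := by omega
      have d : (0:ℤ) < l+1 := by omega
      exact mul_pos (mul_pos (mul_pos a b) c) d
    have hd : (((l+4)*(l+3)*(l+2)*(l+1) : ℤ) : ℂ) ≠ 0 :=
      Int.cast_ne_zero.mpr (ne_of_gt hdZ)
    have hsum : ∀ k : ℤ, A l k 0 + A l k 1 + A l k 2 + A l k 3 + A l k 4 = 1 := by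
      intro k
      simp only [A]
      norm_num
      push_cast at hd ⊢
      field_simp
      rw [div_eq_one_iff_eq hd]
      ring
    funext j
    simp only [Pop, Iop, dv, sumIcc]
    norm_num
    by_cases hj : j = k
    · subst hj; simpa using hsum j
    · simp [hj]
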